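/- arXiv:2310.17964 — 2 statements merged into one kernel-verified Lean document; each statement's English description precedes it below -/
import Mathlib

section
/- Let α > 0, t > 0, c₀ ∈ (0, 1), and h ∈ ℂ with |h| < c₀ t. Then lim_{ε → 0⁺} (1/π) ∫₀^{ε^{1/3}} [ 1/(ε h + √(α² p² + t² ε²)) + 1/(ε h − √(α² p² + t² ε²)) ] dp = − h / (α √(t² − h²)), where √(t² − h²) denotes the principal branch (which has positive real part since |h| < t). -/
open Complex Filter

lemma integral_inv_sq_add (b : ℂ) (hb : 0 < b.re) (X : ℝ) :
    ∫ p in (0:ℝ)..X, 1 / ((p:ℂ)^2 + b^2)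
      = (-I/(2*b)) * (Complex.log (b + I*X) - Complex.log (b - I*X)) := by
  have hbne : b ≠ 0 := by intro h0; rw [h0] at hb; simp at hb
  have hA : ∀ p : ℝ, b + I * p ≠ 0 := fun p h0 => by
    have : (b + I * (p:ℂ)).re = b.re := by simp [Complex.add_re, Complex.mul_re]
    rw [h0] at this; simp at this; rw [← this] at hb; simp at hb
  have hB : ∀ p : ℝ, b - I * p ≠ 0 := fun p h0 => by
    have : (b - I * (p:ℂ)).re = b.re := by simp [Complex.sub_re, Complex.mul_re]
    rw [h0] at this; simp at this; rw [← this] at hb; simp at hb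
  have hprod : ∀ p : ℝ, (b + I*p) * (b - I*p) = (p:ℂ)^2 + b^2 := fun p => by
    linear_combination (-(p:ℂ)^2) * Complex.I_sq
  have hd : ∀ p : ℝ, (p:ℂ)^2 + b^2 ≠ 0 := fun p => by
    rw [← hprod p]; exact mul_ne_zero (hA p) (hB p)
  have hF : ∀ p : ℝ, HasDerivAt
      (fun q : ℝ => (-I/(2*b)) * (Complex.log (b + I*q) - Complex.log (b - I*q)))
      (1 / ((p:ℂ)^2 + b^2)) p := by
    intro p
    have hid : HasDerivAt (fun q : ℝ => (q:ℂ)) 1 p := by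
      simpa using (hasDerivAt_id p).ofReal_comp
    have h1 : HasDerivAt (fun q : ℝ => b + I * (q:ℂ)) I p := by
      simpa using (hid.const_mul I).const_add b
    have h2 : HasDerivAt (fun q : ℝ => b - I * (q:ℂ)) (-I) p := by
      simpa using (hid.const_mul I).const_sub b
    have hre1 : (b + I * (p:ℂ)).re = b.re := by simp [Complex.add_re, Complex.mul_re]
    have hre2 : (b - I * (p:ℂ)).re = b.re := by simp [Complex.sub_re, Complex.mul_re]
    have hl1 := h1.clog_real (Complex.mem_slitPlane_iff.2 (Or.inl (by rw [hre1]; exact hb)))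
    have hl2 := h2.clog_real (Complex.mem_slitPlane_iff.2 (Or.inl (by rw [hre2]; exact hb)))
    have := (hl1.sub hl2).const_mul (-I/(2*b))
    refine this.congr_deriv ?_
    have h2b : (2:ℂ)*b ≠ 0 := by simpa using hbne
    rw [div_sub_div _ _ (hA p) (hB p),
      show I*(b - I*p) - (b + I*p)*(-I) = 2*b*I from by ring, hprod p,
      div_mul_div_comm,
      show -I*(2*b*I) = 2*b from by linear_combination (-2*b)*Complex.I_sq]
    rw [div_eq_div_iff (mul_ne_zero h2b (hd p)) (hd p)]; ring
  have hcont : ContinuousOn (fun p : ℝ => 1 / ((p:ℂ)^2 + b^2)) (Set.uIcc 0 X) := by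
    apply ContinuousOn.div continuousOn_const
    · fun_prop
    · intro p _; exact hd p
  rw [intervalIntegral.integral_eq_sub_of_hasDerivAt (fun p _ => hF p)
    (hcont.intervalIntegrable)]
  simp

/-- The rescaled band integral near the Dirac point converges as `ε → 0⁺` to
`−h/(α √(t² − h²))` (principal branch), identifying the coefficient `β(h)`. -/
theorem stmt_5 (α t c₀ : ℝ) (hα : 0 < α) (ht : 0 < t) (hc₀ : 0 < c₀) (hc₀' : c₀ < 1)
    (h : ℂ) (hh : ‖h‖ < c₀ * t) :
    Tendsto
      (fun ε : ℝ => (1 / (Real.pi : ℂ)) *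
        ∫ p in (0:ℝ)..(ε ^ ((1:ℝ)/3)),
          (1 / ((ε : ℂ) * h + (Real.sqrt (α ^ 2 * p ^ 2 + t ^ 2 * ε ^ 2) : ℂ)) +
           1 / ((ε : ℂ) * h - (Real.sqrt (α ^ 2 * p ^ 2 + t ^ 2 * ε ^ 2) : ℂ))))
      (nhdsWithin 0 (Set.Ioi 0))
      (nhds (-h / ((α : ℂ) * ((t : ℂ) ^ 2 - h ^ 2) ^ ((1:ℂ)/2)))) := by
  have hπ : (Real.pi:ℂ) ≠ 0 := ofReal_ne_zero.2 Real.pi_ne_zero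
  have hα0 : (α:ℂ) ≠ 0 := ofReal_ne_zero.2 hα.ne'
  have habsnn : 0 ≤ ‖h‖ := norm_nonneg _
  have hht : ‖h‖ < t := lt_of_lt_of_le hh (by nlinarith)
  set c : ℂ := ((t:ℂ)^2 - h^2) ^ ((1:ℂ)/2) with hcdef
  have hzre : 0 < ((t:ℂ)^2 - h^2).re := by
    have h1 : ‖h^2‖ < t^2 := by rw [norm_pow]; nlinarith
    have h2 : (h^2).re ≤ ‖h^2‖ := Complex.re_le_norm _
    have h3 : ((t:ℂ)^2 - h^2).re = t^2 - (h^2).re := by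
      simp [Complex.sub_re, ← Complex.ofReal_pow]
    rw [h3]; linarith
  have hz0 : ((t:ℂ)^2 - h^2) ≠ 0 := fun h0 => by rw [h0] at hzre; simp at hzre
  have hc2 : c^2 = (t:ℂ)^2 - h^2 := by
    rw [hcdef, show (1:ℂ)/2 = ((2:ℕ):ℂ)⁻¹ from by norm_num]
    exact Complex.cpow_nat_inv_pow _ two_ne_zero
  have hcre : 0 < c.re := by
    have harg : |((t:ℂ)^2 - h^2).arg| < Real.pi/2 :=
      Complex.abs_arg_lt_pi_div_two_iff.2 (Or.inl hzre)
    have hargl := abs_lt.1 harg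
    rw [hcdef, Complex.cpow_def_of_ne_zero hz0, Complex.exp_re]
    apply mul_pos (Real.exp_pos _)
    have him : (Complex.log ((t:ℂ)^2-h^2) * ((1:ℂ)/2)).im = ((t:ℂ)^2-h^2).arg / 2 := by
      rw [show (1:ℂ)/2 = ((1/2:ℝ):ℂ) from by norm_num]
      simp [Complex.mul_im, Complex.log_im]
      ring
    rw [him]
    apply Real.cos_pos_of_mem_Ioo
    constructor <;> [linarith; linarith]
  have hc0 : c ≠ 0 := fun h0 => by rw [h0] at hcre; simp at hcre
  -- the comparison function
  set w : ℝ → ℂ := fun ε => (((ε ^ ((2:ℝ)/3) / α : ℝ)):ℂ) * c with hwdef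
  have hg : Tendsto (fun ε : ℝ => (1/(Real.pi:ℂ)) * (I*h/((α:ℂ)*c)) *
      (Complex.log (w ε + I) - Complex.log (w ε - I)))
      (nhdsWithin 0 (Set.Ioi 0)) (nhds (-h / ((α:ℂ)*c))) := by
    have h23 : Tendsto (fun ε : ℝ => ε ^ ((2:ℝ)/3) / α) (nhdsWithin 0 (Set.Ioi 0)) (nhds 0) := by
      have hc : ContinuousAt (fun x : ℝ => x ^ ((2:ℝ)/3)) 0 :=
        Real.continuousAt_rpow_const 0 _ (Or.inr (by norm_num))
      have h1 : Tendsto (fun x : ℝ => x ^ ((2:ℝ)/3)) (nhdsWithin 0 (Set.Ioi 0))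
          (nhds ((0:ℝ) ^ ((2:ℝ)/3))) := hc.tendsto.mono_left nhdsWithin_le_nhds
      have h2 := h1.div_const α
      simpa [Real.zero_rpow (by norm_num : ((2:ℝ)/3) ≠ 0)] using h2
    have hw : Tendsto w (nhdsWithin 0 (Set.Ioi 0)) (nhds 0) := by
      have := ((Complex.continuous_ofReal.tendsto 0).comp h23).mul_const c
      simpa [hwdef, Function.comp] using this
    have hl1 : Tendsto (fun ε : ℝ => Complex.log (w ε + I)) (nhdsWithin 0 (Set.Ioi 0))
        (nhds (Complex.log I)) := by
      refine ((_root_.continuousAt_clog ?_).tendsto.comp ?_)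
      · exact Complex.mem_slitPlane_iff.2 (Or.inr (by simp))
      · have h4 := hw.add_const I
        rw [zero_add] at h4; exact h4
    have hl2 : Tendsto (fun ε : ℝ => Complex.log (w ε - I)) (nhdsWithin 0 (Set.Ioi 0))
        (nhds (Complex.log (-I))) := by
      refine ((_root_.continuousAt_clog ?_).tendsto.comp ?_)
      · exact Complex.mem_slitPlane_iff.2 (Or.inr (by simp))
      · have h4 := hw.sub_const I
        rw [zero_sub] at h4; exact h4
    have := (hl1.sub hl2).const_mul ((1/(Real.pi:ℂ)) * (I*h/((α:ℂ)*c)))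
    convert this using 2
    rw [Complex.log_I, Complex.log_neg_I,
      show ((Real.pi:ℂ)/2*I - -((Real.pi:ℂ)/2)*I : ℂ) = (Real.pi:ℂ) * I from by ring]
    field_simp
    linear_combination (-h) * Complex.I_sq
  refine Tendsto.congr' ?_ hg
  filter_upwards [self_mem_nhdsWithin] with ε hε
  have hε : (0:ℝ) < ε := hε
  have hεC : (ε:ℂ) ≠ 0 := ofReal_ne_zero.2 hε.ne'
  set X := ε ^ ((1:ℝ)/3) with hX
  have hXpos : 0 < X := Real.rpow_pos_of_pos hε _
  set b : ℂ := ((ε/α : ℝ):ℂ) * c with hbdef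
  have hbre : 0 < b.re := by
    rw [hbdef, Complex.re_ofReal_mul]; positivity
  have hs2 : ∀ p:ℝ, Real.sqrt (α^2*p^2 + t^2*ε^2) ^ 2 = α^2*p^2+t^2*ε^2 :=
    fun p => Real.sq_sqrt (by positivity)
  have hslb : ∀ p:ℝ, t*ε ≤ Real.sqrt (α^2*p^2+t^2*ε^2) := fun p => by
    rw [show t*ε = Real.sqrt ((t*ε)^2) from (Real.sqrt_sq (by positivity)).symm]
    exact Real.sqrt_le_sqrt (by nlinarith)
  have habs : ∀ p:ℝ, ‖(ε:ℂ)*h‖ < Real.sqrt (α^2*p^2+t^2*ε^2) := fun p => by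
    rw [norm_mul, Complex.norm_real, Real.norm_eq_abs, abs_of_pos hε]
    calc ε * ‖h‖ < ε * (c₀*t) := by exact mul_lt_mul_of_pos_left hh hε
      _ ≤ t * ε := by nlinarith [mul_pos ht hε]
      _ ≤ _ := hslb p
  have hne1 : ∀ p:ℝ, (ε:ℂ)*h + ((Real.sqrt (α^2*p^2+t^2*ε^2):ℝ):ℂ) ≠ 0 := fun p h0 => by
    have h1 : (ε:ℂ)*h = -((Real.sqrt (α^2*p^2+t^2*ε^2):ℝ):ℂ) := by
      linear_combination h0
    have h2 : ‖(ε:ℂ)*h‖ = Real.sqrt (α^2*p^2+t^2*ε^2) := by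
      rw [h1, norm_neg, Complex.norm_real, Real.norm_eq_abs, _root_.abs_of_nonneg (Real.sqrt_nonneg _)]
    have := habs p; rw [h2] at this; exact lt_irrefl _ this
  have hne2 : ∀ p:ℝ, (ε:ℂ)*h - ((Real.sqrt (α^2*p^2+t^2*ε^2):ℝ):ℂ) ≠ 0 := fun p h0 => by
    have h1 : (ε:ℂ)*h = ((Real.sqrt (α^2*p^2+t^2*ε^2):ℝ):ℂ) := by
      linear_combination h0
    have h2 : ‖(ε:ℂ)*h‖ = Real.sqrt (α^2*p^2+t^2*ε^2) := by
      rw [h1, Complex.norm_real, Real.norm_eq_abs, _root_.abs_of_nonneg (Real.sqrt_nonneg _)]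
    have := habs p; rw [h2] at this; exact lt_irrefl _ this
  have hsC : ∀ p:ℝ, ((Real.sqrt (α^2*p^2+t^2*ε^2):ℝ):ℂ)^2
      = (α:ℂ)^2*(p:ℂ)^2 + (t:ℂ)^2*(ε:ℂ)^2 := fun p => by
    rw [← Complex.ofReal_pow, hs2 p]; push_cast
    try ring_nf
  have hb2 : (α:ℂ)^2 * b^2 = (ε:ℂ)^2 * ((t:ℂ)^2 - h^2) := by
    rw [hbdef, mul_pow, hc2]; push_cast; field_simp
    try ring
  have hfac : ∀ p:ℝ, ((ε:ℂ)*h + ((Real.sqrt (α^2*p^2+t^2*ε^2):ℝ):ℂ))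
      * ((ε:ℂ)*h - ((Real.sqrt (α^2*p^2+t^2*ε^2):ℝ):ℂ))
      = -(α:ℂ)^2 * ((p:ℂ)^2 + b^2) := fun p => by
    linear_combination -hsC p + hb2
  have hd : ∀ p:ℝ, (p:ℂ)^2 + b^2 ≠ 0 := fun p h0 => by
    have := hfac p; rw [h0, mul_zero] at this
    exact (mul_ne_zero (hne1 p) (hne2 p)) this
  have key : ∀ p:ℝ,
      1/((ε:ℂ)*h + ((Real.sqrt (α^2*p^2+t^2*ε^2):ℝ):ℂ))
        + 1/((ε:ℂ)*h - ((Real.sqrt (α^2*p^2+t^2*ε^2):ℝ):ℂ))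
      = -(2*(ε:ℂ)*h/(α:ℂ)^2) * (1/((p:ℂ)^2 + b^2)) := fun p => by
    rw [one_div_add_one_div (hne1 p) (hne2 p), hfac p,
      show (ε:ℂ)*h + ((Real.sqrt (α^2*p^2+t^2*ε^2):ℝ):ℂ)
          + ((ε:ℂ)*h - ((Real.sqrt (α^2*p^2+t^2*ε^2):ℝ):ℂ)) = 2*(ε:ℂ)*h from by ring]
    rw [div_eq_iff (by exact mul_ne_zero (neg_ne_zero.2 (pow_ne_zero 2 hα0)) (hd p))]
    field_simp
    rw [mul_div_assoc, div_self (hd p), mul_one]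
  have hint : (∫ p in (0:ℝ)..X,
        (1/((ε:ℂ)*h + ((Real.sqrt (α^2*p^2+t^2*ε^2):ℝ):ℂ))
          + 1/((ε:ℂ)*h - ((Real.sqrt (α^2*p^2+t^2*ε^2):ℝ):ℂ))))
      = -(2*(ε:ℂ)*h/(α:ℂ)^2) *
        ((-I/(2*b)) * (Complex.log (b + I*X) - Complex.log (b - I*X))) := by
    rw [intervalIntegral.integral_congr
        (g := fun p : ℝ => -(2*(ε:ℂ)*h/(α:ℂ)^2) * (1/((p:ℂ)^2 + b^2)))
        (fun p _ => key p),
      intervalIntegral.integral_const_mul, integral_inv_sq_add b hbre X]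
  have hXreal : X * (ε ^ ((2:ℝ)/3) / α) = ε/α := by
    rw [hX, ← mul_div_assoc, ← Real.rpow_add hε]
    norm_num
  have hXw : ((X:ℝ):ℂ) * w ε = b := by
    show ((X:ℝ):ℂ) * ((((ε ^ ((2:ℝ)/3) / α : ℝ)):ℂ) * c) = ((ε/α : ℝ):ℂ) * c
    rw [← mul_assoc, ← Complex.ofReal_mul, hXreal]
  have hwre : 0 < (w ε).re := by
    rw [hwdef, Complex.re_ofReal_mul]
    have := Real.rpow_pos_of_pos hε ((2:ℝ)/3)
    positivity
  have hw1 : w ε + I ≠ 0 := fun h0 => by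
    have : (w ε + I).re = (w ε).re := by simp [Complex.add_re]
    rw [h0] at this; simp at this; rw [← this] at hwre; simp at hwre
  have hw2 : w ε - I ≠ 0 := fun h0 => by
    have : (w ε - I).re = (w ε).re := by simp [Complex.sub_re]
    rw [h0] at this; simp at this; rw [← this] at hwre; simp at hwre
  have hlogdiff : Complex.log (b + I*X) - Complex.log (b - I*X)
      = Complex.log (w ε + I) - Complex.log (w ε - I) := by
    rw [show b + I*(X:ℂ) = (X:ℂ)*(w ε + I) from by rw [mul_add, hXw]; ring,
      show b - I*(X:ℂ) = (X:ℂ)*(w ε - I) from by rw [mul_sub, hXw]; ring,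
      Complex.log_ofReal_mul hXpos hw1, Complex.log_ofReal_mul hXpos hw2]
    ring
  have hcoef : -(2*(ε:ℂ)*h/(α:ℂ)^2) * (-I/(2*b)) = I*h/((α:ℂ)*c) := by
    rw [hbdef]; push_cast; field_simp
    try ring
  show (1/(Real.pi:ℂ)) * (I*h/((α:ℂ)*c)) * (Complex.log (w ε + I) - Complex.log (w ε - I))
      = _
  rw [hint, hlogdiff, ← mul_assoc (-(2*(ε:ℂ)*h/(α:ℂ)^2)), hcoef, mul_assoc]
end

section
/- Let H be a complex Hilbert space, let L : ℝ → (H →L[ℂ] H) and v : ℝ → H be differentiable at 0, and μ : ℝ → ℝ differentiable at 0, such that: L(p) is self-adjoint for every p, ‖v(p)‖ = 1 for every p, and L(p) v(p) = μ(p) • v(p) for every p. Then μ'(0) = re ⟨L'(0) v(0), v(0)⟩, where L'(0) denotes the derivative of L at 0 (and in fact ⟨L'(0)v(0), v(0)⟩ is real, so μ'(0) = ⟨L'(0) v(0), v(0)⟩). -/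
open Complex

/-- Hellmann–Feynman theorem: for a differentiable family of symmetric operators `L(p)`
with normalized eigenvectors `v(p)` and eigenvalues `μ(p)`, one has
`μ'(0) = Re ⟨L'(0) v(0), v(0)⟩`, and this inner ℂ product is real. -/
theorem stmt_16 {H : Type*} [NormedAddCommGroup H] [InnerProductSpace ℂ H]
    (L : ℝ → (H →L[ℂ] H)) (v : ℝ → H) (μ : ℝ → ℝ)
    (L' : H →L[ℂ] H) (hL' : HasDerivAt L L' 0)
    (v' : H) (hv' : HasDerivAt v v' 0)
    (μ' : ℝ) (hμ' : HasDerivAt μ μ' 0)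
    (hsym : ∀ (p : ℝ) (x y : H), (inner ℂ ((L p) x) y : ℂ) = inner ℂ x ((L p) y))
    (hnorm : ∀ p : ℝ, ‖v p‖ = 1)
    (heig : ∀ p : ℝ, (L p) (v p) = (μ p : ℂ) • v p) :
    μ' = (inner ℂ (L' (v 0)) (v 0) : ℂ).re ∧ (inner ℂ (L' (v 0)) (v 0) : ℂ).im = 0 := by
  -- restrict scalars to ℝ to differentiate the application
  set T := ContinuousLinearMap.restrictScalarsL ℂ H H ℝ ℝ
  have hLr : HasDerivAt (fun p => (L p).restrictScalars ℝ) (L'.restrictScalars ℝ) 0 :=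
    T.hasFDerivAt.comp_hasDerivAt 0 hL'
  have hLv : HasDerivAt (fun p => L p (v p)) (L' (v 0) + L 0 v') 0 := by
    have := hLr.clm_apply hv'
    simpa using this
  -- derivative of p ↦ ⟪L p (v p), v p⟫
  have hg : HasDerivAt (fun p => (inner ℂ (L p (v p)) (v p) : ℂ))
      (inner ℂ (L 0 (v 0)) v' + inner ℂ (L' (v 0) + L 0 v') (v 0)) 0 :=
    hLv.inner ℂ hv'
  -- the function equals p ↦ (μ p : ℂ)
  have hfun : (fun p => (inner ℂ (L p (v p)) (v p) : ℂ)) = fun p => (μ p : ℂ) := by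
    funext p
    rw [heig p, inner_smul_left, inner_self_eq_norm_sq_to_K, hnorm p]
    simp
  have hμC : HasDerivAt (fun p => (μ p : ℂ)) (μ' : ℂ) 0 := hμ'.ofReal_comp
  rw [hfun] at hg
  have hkey : (μ' : ℂ) = inner ℂ (L 0 (v 0)) v' + inner ℂ (L' (v 0) + L 0 v') (v 0) :=
    hμC.unique hg
  -- derivative of the constant ‖v p‖² = 1
  have hn : HasDerivAt (fun p => (inner ℂ (v p) (v p) : ℂ)) (inner ℂ (v 0) v' + inner ℂ v' (v 0)) 0 :=
    hv'.inner ℂ hv'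
  have hnconst : (fun p => (inner ℂ (v p) (v p) : ℂ)) = fun _ => (1 : ℂ) := by
    funext p
    rw [inner_self_eq_norm_sq_to_K, hnorm p]; simp
  rw [hnconst] at hn
  have hzero : (inner ℂ (v 0) v' + inner ℂ v' (v 0) : ℂ) = 0 :=
    ((hasDerivAt_const (0 : ℝ) (1 : ℂ)).unique hn).symm
  -- simplify the key identity
  have h1 : (inner ℂ (L 0 (v 0)) v' : ℂ) = (μ 0 : ℂ) * inner ℂ (v 0) v' := by
    rw [heig 0, inner_smul_left]
    simp
  have h2 : (inner ℂ (L 0 v') (v 0) : ℂ) = (μ 0 : ℂ) * inner ℂ v' (v 0) := by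
    rw [hsym 0, heig 0, inner_smul_right]
  have hfinal : (μ' : ℂ) = inner ℂ (L' (v 0)) (v 0) := by
    rw [hkey, inner_add_left, h1, h2]
    have : (μ 0 : ℂ) * inner ℂ (v 0) v' + (inner ℂ (L' (v 0)) (v 0) + (μ 0 : ℂ) * inner ℂ v' (v 0))
        = (μ 0 : ℂ) * ((inner ℂ (v 0) v' + inner ℂ v' (v 0) : ℂ)) + inner ℂ (L' (v 0)) (v 0) := by
      ring
    rw [this, hzero]
    simp
  constructor
  · rw [← hfinal]; simp
  · rw [← hfinal]; simp
end
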